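/- In an abstract FTvN system (V, W, λ), let E = λ⁻¹(Q) be a spectral set, Φ = φ∘λ a spectral function (φ : W → ℝ), and h : V → ℝ. If a maximizes h + Φ over E and d satisfies h(x) − h(a) ≥ ⟨d, x − a⟩ for all x ∈ E, then ⟨a, d⟩ = ⟨λ(a), λ(d)⟩. -/

import Mathlib

theorem stmt16 {V W : Type*}
    [NormedAddCommGroup V] [InnerProductSpace ℝ V]
    [NormedAddCommGroup W] [InnerProductSpace ℝ W]
    (lam : V → W) (hnorm : ∀ x, ‖lam x‖ = ‖x‖)
    (hmax : ∀ c u : V,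
      IsGreatest {r : ℝ | ∃ x : V, lam x = lam u ∧ r = inner ℝ c x}
        (inner ℝ (lam c) (lam u)))
    (Q : Set W) (E : Set V) (hEQ : E = lam ⁻¹' Q) (hE : E.Nonempty)
    (φ : W → ℝ) (h : V → ℝ)
    (a : V) (ha : a ∈ E)
    (hopt : ∀ x ∈ E, h x + φ (lam x) ≤ h a + φ (lam a))
    (d : V)
    (hd : ∀ x ∈ E, h x - h a ≥ (inner ℝ d (x - a) : ℝ)) :
    (inner ℝ a d : ℝ) = inner ℝ (lam a) (lam d) := by
  obtain ⟨⟨x, hx, hrx⟩, hub⟩ := hmax d a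
  have hxE : x ∈ E := by
    rw [hEQ] at ha ⊢
    simpa [Set.mem_preimage, hx] using ha
  have hle : (inner ℝ d a : ℝ) ≤ inner ℝ (lam d) (lam a) :=
    hub ⟨a, rfl, rfl⟩
  have h1 : h x ≤ h a := by
    have := hopt x hxE
    rw [hx] at this
    linarith
  have h2 := hd x hxE
  rw [inner_sub_right, ← hrx] at h2
  have : (inner ℝ d a : ℝ) = inner ℝ (lam d) (lam a) := by linarith
  rw [real_inner_comm d a, this]; exact real_inner_comm (lam a) (lam d)
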